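/- Let λ_0 < λ_1 < ⋯ < λ_m be nonnegative integers, Q(t) = Σ_{j=0}^m A_j cos(λ_j t) with real coefficients, and A := max_j |A_j|. If Q has at most K−1 zeros in the period [−π, π), then ∫_{−π}^{π} |Q(t)| dt ≤ 2KA(π + Σ_{j=1}^m 1/λ_j). -/

import Mathlib

open Real Set intervalIntegral

private lemma analyticAt_real_cos (x : ℝ) : AnalyticAt ℝ Real.cos x := by
  have h1 : AnalyticAt ℝ (fun t : ℝ => Complex.exp ((t : ℂ) * Complex.I)) x := by
    have hl : AnalyticAt ℝ (fun t : ℝ => (t : ℂ) * Complex.I) x :=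
      ((Complex.ofRealCLM.analyticAt x).mul analyticAt_const)
    have he : AnalyticAt ℝ Complex.exp ((x : ℂ) * Complex.I) :=
      analyticAt_cexp.restrictScalars
    exact AnalyticAt.comp (f := fun t : ℝ => (t : ℂ) * Complex.I) he hl
  have h2 : AnalyticAt ℝ (fun t : ℝ => (Complex.exp ((t : ℂ) * Complex.I)).re) x :=
    (Complex.reCLM.analyticAt _).comp h1
  refine h2.congr ?_
  filter_upwards with t using (Complex.exp_ofReal_mul_I_re t)

/-- If a continuous function does not vanish on the open interval, the integral of its
absolute value equals the absolute value of its integral. -/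
private lemma abs_integral_of_no_zero {f : ℝ → ℝ} (hf : Continuous f) {a b : ℝ} (hab : a ≤ b)
    (h0 : ∀ x ∈ Set.Ioo a b, f x ≠ 0) :
    ∫ x in a..b, |f x| = |∫ x in a..b, f x| := by
  have hb : ∀ᵐ x : ℝ, x ≠ b := by
    rw [MeasureTheory.ae_iff]
    simp only [ne_eq, not_not]
    have : {x : ℝ | x = b} = {b} := by ext; simp
    rw [this]
    exact Real.volume_singleton
  have hIoc : ∀ x : ℝ, x ∈ Set.uIoc a b → x ≠ b → x ∈ Set.Ioo a b := by
    intro x hx hxb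
    rw [Set.uIoc_of_le hab] at hx
    exact ⟨hx.1, lt_of_le_of_ne hx.2 hxb⟩
  have h2 : 0 ≤ ∫ x in a..b, |f x| :=
    intervalIntegral.integral_nonneg hab (fun u _ => abs_nonneg _)
  have hsign : (∀ x ∈ Set.Ioo a b, 0 ≤ f x) ∨ (∀ x ∈ Set.Ioo a b, f x ≤ 0) := by
    by_contra hcon
    push_neg at hcon
    obtain ⟨⟨u, hu, hfu⟩, ⟨v, hv, hfv⟩⟩ := hcon
    have hmem : (0 : ℝ) ∈ Set.uIcc (f u) (f v) := by
      rw [Set.mem_uIcc]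
      left; exact ⟨le_of_lt hfu, le_of_lt hfv⟩
    have := intermediate_value_uIcc (a := u) (b := v) hf.continuousOn hmem
    obtain ⟨w, hw, hw0⟩ := this
    have hwmem : w ∈ Set.Ioo a b :=
      (Set.ordConnected_Ioo.uIcc_subset hu hv) hw
    exact h0 w hwmem hw0
  rcases hsign with hpos | hneg
  · have h1 : (∫ x in a..b, |f x|) = ∫ x in a..b, f x := by
      refine intervalIntegral.integral_congr_ae ?_
      filter_upwards [hb] with x hxb hx
      exact abs_of_nonneg (hpos x (hIoc x hx hxb))
    rw [← h1, abs_of_nonneg h2]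
  · have h1 : (∫ x in a..b, |f x|) = ∫ x in a..b, -f x := by
      refine intervalIntegral.integral_congr_ae ?_
      filter_upwards [hb] with x hxb hx
      exact abs_of_nonpos (hneg x (hIoc x hx hxb))
    rw [intervalIntegral.integral_neg] at h1
    have : |∫ x in a..b, f x| = ∫ x in a..b, |f x| := by
      rw [h1, abs_of_nonpos (by linarith)]
    rw [this]

/-- Key induction: if a continuous function has at most `n` zeros in `(a, b)` and each
sub-interval integral is bounded by `c * length + D`, then the L¹ norm is bounded. -/
private lemma key_induction {f : ℝ → ℝ} (hf : Continuous f) {c D : ℝ} (hD : 0 ≤ D)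
    (H : ∀ s t : ℝ, s ≤ t → |∫ x in s..t, f x| ≤ c * (t - s) + D) :
    ∀ n : ℕ, ∀ a b : ℝ, a ≤ b → ({x ∈ Set.Ioo a b | f x = 0}).Finite →
      ({x ∈ Set.Ioo a b | f x = 0}).ncard ≤ n →
      ∫ x in a..b, |f x| ≤ c * (b - a) + (n + 1) * D := by
  intro n
  induction n using Nat.strong_induction_on with
  | _ n IH =>
    intro a b hab hfin hcard
    by_cases hz : ∀ x ∈ Set.Ioo a b, f x ≠ 0
    · rw [abs_integral_of_no_zero hf hab hz]
      have h1 := H a b hab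
      have h2 : D ≤ ((n : ℝ) + 1) * D := by nlinarith [Nat.cast_nonneg (α := ℝ) n]
      linarith
    · push_neg at hz
      obtain ⟨z, hzmem, hz0⟩ := hz
      have hzS : z ∈ {x ∈ Set.Ioo a b | f x = 0} := ⟨hzmem, hz0⟩
      set S₁ := {x ∈ Set.Ioo a z | f x = 0} with hS₁
      set S₂ := {x ∈ Set.Ioo z b | f x = 0} with hS₂
      have hsub1 : S₁ ⊆ {x ∈ Set.Ioo a b | f x = 0} \ {z} := by
        rintro x ⟨⟨hx1, hx2⟩, hx3⟩
        exact ⟨⟨⟨hx1, hx2.trans hzmem.2⟩, hx3⟩, by simp [ne_of_lt hx2]⟩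
      have hsub2 : S₂ ⊆ {x ∈ Set.Ioo a b | f x = 0} \ {z} := by
        rintro x ⟨⟨hx1, hx2⟩, hx3⟩
        exact ⟨⟨⟨hzmem.1.trans hx1, hx2⟩, hx3⟩, by simp [(ne_of_lt hx1).symm]⟩
      have hfind : ({x ∈ Set.Ioo a b | f x = 0} \ {z}).Finite := hfin.diff
      have hfin1 : S₁.Finite := hfind.subset hsub1
      have hfin2 : S₂.Finite := hfind.subset hsub2
      have hdisj : Disjoint S₁ S₂ := by
        rw [Set.disjoint_left]
        rintro x ⟨⟨_, hx2⟩, _⟩ ⟨⟨hx1', _⟩, _⟩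
        exact absurd hx1' (not_lt.2 (le_of_lt hx2))
      have hcard12 : S₁.ncard + S₂.ncard + 1 ≤ n := by
        have hunion : (S₁ ∪ S₂).ncard = S₁.ncard + S₂.ncard :=
          Set.ncard_union_eq hdisj hfin1 hfin2
        have hle : (S₁ ∪ S₂).ncard ≤ ({x ∈ Set.Ioo a b | f x = 0} \ {z}).ncard :=
          Set.ncard_le_ncard (Set.union_subset hsub1 hsub2) hfind
        have heq : ({x ∈ Set.Ioo a b | f x = 0} \ {z}).ncard + 1
            = ({x ∈ Set.Ioo a b | f x = 0}).ncard :=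
          Set.ncard_diff_singleton_add_one hzS hfin
        omega
      have haz : a ≤ z := le_of_lt hzmem.1
      have hzb : z ≤ b := le_of_lt hzmem.2
      have h1 := IH S₁.ncard (by omega) a z haz hfin1 le_rfl
      have h2 := IH S₂.ncard (by omega) z b hzb hfin2 le_rfl
      have hsplit : (∫ x in a..z, |f x|) + ∫ x in z..b, |f x| = ∫ x in a..b, |f x| :=
        intervalIntegral.integral_add_adjacent_intervals
          (hf.abs.intervalIntegrable a z) (hf.abs.intervalIntegrable z b)
      rw [← hsplit]
      have hcast : (S₁.ncard : ℝ) + (S₂.ncard : ℝ) + 1 ≤ (n : ℝ) := by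
        exact_mod_cast hcard12
      nlinarith [hD]


private lemma cos_integral_eval (c : ℝ) (hc : c ≠ 0) (s t : ℝ) :
    ∫ x in s..t, Real.cos (c * x) = (Real.sin (c * t) - Real.sin (c * s)) / c := by
  rw [intervalIntegral.integral_comp_mul_left _ hc, integral_cos, smul_eq_mul]
  ring

private lemma integral_bound (m : ℕ) (lam : Fin (m + 1) → ℕ) (hmono : StrictMono lam)
    (A : Fin (m + 1) → ℝ) (Amax : ℝ) (hA : ∀ j, |A j| ≤ Amax) (s t : ℝ) (hst : s ≤ t) :
    |∫ x in s..t, ∑ j : Fin (m + 1), A j * Real.cos ((lam j : ℝ) * x)|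
      ≤ Amax * (t - s) + 2 * Amax *
        ∑ j ∈ Finset.univ.filter (fun j : Fin (m + 1) => j ≠ 0), 1 / (lam j : ℝ) := by
  have hAm : 0 ≤ Amax := (abs_nonneg _).trans (hA 0)
  have hcont : ∀ j : Fin (m + 1), Continuous (fun x => A j * Real.cos ((lam j : ℝ) * x)) :=
    fun j => continuous_const.mul (Real.continuous_cos.comp (continuous_const.mul continuous_id))
  rw [intervalIntegral.integral_finset_sum (fun j _ => (hcont j).intervalIntegrable s t)]
  set g : Fin (m + 1) → ℝ := fun j => ∫ x in s..t, Real.cos ((lam j : ℝ) * x) with hg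
  have hgj : ∀ j, (∫ x in s..t, A j * Real.cos ((lam j : ℝ) * x)) = A j * g j := fun j =>
    intervalIntegral.integral_const_mul _ _
  simp only [hgj]
  have hlam : ∀ j : Fin (m + 1), j ≠ 0 → 1 ≤ lam j := by
    intro j hj
    have : lam 0 < lam j := hmono (Fin.pos_of_ne_zero hj)
    omega
  have bound1 : ∀ j, |g j| ≤ t - s := by
    intro j
    by_cases hc : (lam j : ℝ) = 0
    · simp only [hg, hc, zero_mul, Real.cos_zero, intervalIntegral.integral_const, smul_eq_mul,
        mul_one]
      rw [abs_of_nonneg (by linarith)]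
    · have hcpos : (0 : ℝ) < (lam j : ℝ) := lt_of_le_of_ne (Nat.cast_nonneg _) (Ne.symm hc)
      rw [hg]
      simp only
      rw [cos_integral_eval _ hc, abs_div, abs_of_pos hcpos]
      rw [div_le_iff₀ hcpos]
      have hss : Real.sin ((lam j : ℝ) * t) - Real.sin ((lam j : ℝ) * s)
          = 2 * Real.sin (((lam j : ℝ) * t - (lam j : ℝ) * s) / 2)
            * Real.cos (((lam j : ℝ) * t + (lam j : ℝ) * s) / 2) := Real.sin_sub_sin _ _
      rw [hss]
      have h1 : |2 * Real.sin (((lam j : ℝ) * t - (lam j : ℝ) * s) / 2)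
          * Real.cos (((lam j : ℝ) * t + (lam j : ℝ) * s) / 2)|
          ≤ 2 * |Real.sin (((lam j : ℝ) * t - (lam j : ℝ) * s) / 2)| := by
        rw [abs_mul, abs_mul, abs_two]
        have := Real.abs_cos_le_one (((lam j : ℝ) * t + (lam j : ℝ) * s) / 2)
        nlinarith [abs_nonneg (Real.sin (((lam j : ℝ) * t - (lam j : ℝ) * s) / 2))]
      have h2 : |Real.sin (((lam j : ℝ) * t - (lam j : ℝ) * s) / 2)|
          ≤ |((lam j : ℝ) * t - (lam j : ℝ) * s) / 2| := Real.abs_sin_le_abs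
      have h3 : |((lam j : ℝ) * t - (lam j : ℝ) * s) / 2| = (lam j : ℝ) * (t - s) / 2 := by
        rw [abs_div, abs_two, abs_of_nonneg (by nlinarith)]
        ring
      nlinarith
  have bound2 : ∀ j : Fin (m + 1), j ≠ 0 → |g j| ≤ 2 / (lam j : ℝ) := by
    intro j hj
    have h1 : (1 : ℝ) ≤ (lam j : ℝ) := by exact_mod_cast hlam j hj
    have hc : (lam j : ℝ) ≠ 0 := by linarith
    have hpos : (0 : ℝ) < (lam j : ℝ) := by linarith
    have habs : |Real.sin ((lam j : ℝ) * t) - Real.sin ((lam j : ℝ) * s)| ≤ 2 := by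
      have h2 := Real.abs_sin_le_one ((lam j : ℝ) * t)
      have h3 := Real.abs_sin_le_one ((lam j : ℝ) * s)
      have h4 := abs_sub (Real.sin ((lam j : ℝ) * t)) (Real.sin ((lam j : ℝ) * s))
      linarith
    rw [hg]
    simp only
    rw [cos_integral_eval _ hc, abs_div, abs_of_pos hpos, div_le_div_iff₀ hpos hpos]
    nlinarith
  calc |∑ j : Fin (m + 1), A j * g j| ≤ ∑ j : Fin (m + 1), |A j * g j| :=
        Finset.abs_sum_le_sum_abs _ _
    _ = |A 0 * g 0| + ∑ j ∈ Finset.univ.filter (fun j : Fin (m + 1) => j ≠ 0), |A j * g j| := by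
        rw [← Finset.sum_filter_add_sum_filter_not Finset.univ (fun j : Fin (m + 1) => j = 0)]
        congr 1
        rw [Finset.filter_eq' Finset.univ (0 : Fin (m + 1))]
        simp
    _ ≤ Amax * (t - s) + ∑ j ∈ Finset.univ.filter (fun j : Fin (m + 1) => j ≠ 0),
          Amax * (2 / (lam j : ℝ)) := by
        gcongr with j hj
        · rw [abs_mul]
          exact mul_le_mul (hA 0) (bound1 0) (abs_nonneg _) hAm
        · rw [abs_mul]
          exact mul_le_mul (hA j) (bound2 j (Finset.mem_filter.1 hj).2) (abs_nonneg _) hAm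
    _ = Amax * (t - s) + 2 * Amax *
          ∑ j ∈ Finset.univ.filter (fun j : Fin (m + 1) => j ≠ 0), 1 / (lam j : ℝ) := by
        rw [Finset.mul_sum]
        congr 1
        refine Finset.sum_congr rfl fun j _ => ?_
        ring


/-- If the cosine polynomial `Q` has at most `K - 1` zeros in the period `[-π, π)`, then
its `L¹` norm is at most `2KA(π + Σ_{j=1}^m 1/λ_j)`. -/
theorem cosine_few_zeros_upper_bound (m : ℕ) (lam : Fin (m + 1) → ℕ)
    (hmono : StrictMono lam) (A : Fin (m + 1) → ℝ) (Amax : ℝ)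
    (hA : ∀ j, |A j| ≤ Amax) (K : ℕ) (hK : 1 ≤ K)
    (hz : ({t ∈ Set.Ico (-Real.pi) Real.pi |
        ∑ j : Fin (m + 1), A j * Real.cos ((lam j : ℝ) * t) = 0}).ncard ≤ K - 1) :
    ∫ t in (-Real.pi)..Real.pi, |∑ j : Fin (m + 1), A j * Real.cos ((lam j : ℝ) * t)| ≤
      2 * K * Amax *
        (Real.pi + ∑ j ∈ Finset.univ.filter (fun j : Fin (m + 1) => j ≠ 0), 1 / (lam j : ℝ)) := by
  have hAm : 0 ≤ Amax := (abs_nonneg _).trans (hA 0)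
  have hK1 : (1 : ℝ) ≤ (K : ℝ) := by exact_mod_cast hK
  set Q : ℝ → ℝ := fun t => ∑ j : Fin (m + 1), A j * Real.cos ((lam j : ℝ) * t) with hQdef
  have hQc : Continuous Q := by
    apply continuous_finset_sum
    intro j _
    exact continuous_const.mul (Real.continuous_cos.comp (continuous_const.mul continuous_id))
  have hsum_nonneg : (0 : ℝ) ≤
      ∑ j ∈ Finset.univ.filter (fun j : Fin (m + 1) => j ≠ 0), 1 / (lam j : ℝ) :=
    Finset.sum_nonneg fun j _ => by positivity
  set SIG : ℝ := ∑ j ∈ Finset.univ.filter (fun j : Fin (m + 1) => j ≠ 0), 1 / (lam j : ℝ)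
    with hSIGdef
  have hD : 0 ≤ 2 * Amax * SIG := mul_nonneg (by linarith) hsum_nonneg
  set S : Set ℝ := {t ∈ Set.Ico (-Real.pi) Real.pi | Q t = 0} with hSdef
  by_cases hfin : S.Finite
  · -- finitely many zeros
    have hsub : {x ∈ Set.Ioo (-Real.pi) Real.pi | Q x = 0} ⊆ S := by
      rintro x ⟨hx1, hx2⟩
      exact ⟨⟨le_of_lt hx1.1, hx1.2⟩, hx2⟩
    have hfin' : ({x ∈ Set.Ioo (-Real.pi) Real.pi | Q x = 0}).Finite := hfin.subset hsub
    have hcard' : ({x ∈ Set.Ioo (-Real.pi) Real.pi | Q x = 0}).ncard ≤ K - 1 :=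
      le_trans (Set.ncard_le_ncard hsub hfin) hz
    have hb := key_induction hQc hD (fun s t hst => integral_bound m lam hmono A Amax hA s t hst) (K - 1)
      (-Real.pi) Real.pi (by linarith [Real.pi_pos]) hfin' hcard'
    have hcast : ((K - 1 : ℕ) : ℝ) = (K : ℝ) - 1 := by
      rw [Nat.cast_sub hK]; norm_num
    rw [hcast] at hb
    have hpi := Real.pi_pos
    nlinarith [mul_nonneg (mul_nonneg hAm hsum_nonneg) (sub_nonneg.2 hK1),
      mul_nonneg (mul_nonneg hAm hpi.le) (sub_nonneg.2 hK1)]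
  · -- infinitely many zeros: Q is identically zero by analyticity
    have hana : AnalyticOnNhd ℝ Q Set.univ := by
      intro x _
      apply Finset.analyticAt_fun_sum
      intro j _
      exact analyticAt_const.mul
        (AnalyticAt.comp (f := fun t : ℝ => (lam j : ℝ) * t)
          (analyticAt_real_cos _) (analyticAt_const.mul analyticAt_id))
    have hScpt : S ⊆ Set.Icc (-Real.pi) Real.pi := fun x hx => ⟨hx.1.1, le_of_lt hx.1.2⟩
    have hinf : S.Infinite := hfin
    obtain ⟨x, hxmem, hxacc⟩ := hinf.exists_accPt_of_subset_isCompact isCompact_Icc hScpt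
    have hfreq : ∃ᶠ z in nhdsWithin x {x}ᶜ, Q z = 0 := by
      have h1 : ∃ᶠ y in nhds x, y ≠ x ∧ y ∈ S := accPt_iff_frequently.mp hxacc
      rw [frequently_nhdsWithin_iff]
      refine h1.mono ?_
      rintro y ⟨hy1, hy2⟩
      exact ⟨hy2.2, hy1⟩
    have hEq : Set.EqOn Q 0 Set.univ :=
      hana.eqOn_zero_of_preconnected_of_frequently_eq_zero isPreconnected_univ
        (Set.mem_univ x) hfreq
    have hQ0 : ∀ t : ℝ, ∑ j : Fin (m + 1), A j * Real.cos ((lam j : ℝ) * t) = 0 :=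
      fun t => hEq (Set.mem_univ t)
    simp only [hQ0, abs_zero, intervalIntegral.integral_zero]
    have hpi := Real.pi_pos
    positivity
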